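/- Let S ⊆ {1, …, d}. Then S is minimally invariant if and only if S is invariant and, for every j ∈ S, the set S \ {j} is not invariant. -/

import Mathlib

/-- Nodes of the graph: the environment node `E`, predictor nodes `V j` for
`j ∈ {1, …, d}` (represented by `Fin d`), and the response node `Y`. -/
inductive Node (d : ℕ) : Type where
  | E : Node d
  | V : Fin d → Node d
  | Y : Node d
deriving DecidableEq

/-- A directed acyclic graph on `{E} ∪ {1, …, d} ∪ {Y}` in which `E` has no
parents (`E` is exogenous). -/
structure CGraph (d : ℕ) where
  adj : Node d → Node d → Prop
  acyclic : ∀ v, ¬ Relation.TransGen adj v v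
  exogenous : ∀ v, ¬ adj v Node.E

namespace CGraph

variable {d : ℕ} (G : CGraph d)

/-- Undirected adjacency: an edge between `u` and `v` in either direction. -/
def Edge (u v : Node d) : Prop := G.adj u v ∨ G.adj v u

/-- `p` is a path between `a` and `b`: a duplicate-free list of nodes starting
at `a`, ending at `b`, with consecutive nodes adjacent (in either direction). -/
def IsPath (p : List (Node d)) (a b : Node d) : Prop :=
  p.head? = some a ∧ p.getLast? = some b ∧ p.Nodup ∧ p.Chain' G.Edge

/-- `x` is a (strict) descendant of `v`. -/
def Desc (v x : Node d) : Prop := Relation.TransGen G.adj v x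

/-- The consecutive triple `u, m, w` on a path blocks the path given `C`:
either `m` is a non-collider lying in `C`, or `m` is a collider such that
neither `m` nor any of its descendants lies in `C`. -/
def BlockedAt (C : Set (Node d)) (u m w : Node d) : Prop :=
  (¬ (G.adj u m ∧ G.adj w m) ∧ m ∈ C) ∨
  ((G.adj u m ∧ G.adj w m) ∧ m ∉ C ∧ ∀ x, G.Desc m x → x ∉ C)

/-- A path `p` is blocked by `C` if some consecutive triple on it blocks it. -/
def Blocked (C : Set (Node d)) (p : List (Node d)) : Prop :=
  ∃ q u m w r, p = q ++ u :: m :: w :: r ∧ G.BlockedAt C u m w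

/-- `a` and `b` are d-separated given `C`: every path between them is blocked. -/
def DSep (a b : Node d) (C : Set (Node d)) : Prop :=
  ∀ p, G.IsPath p a b → G.Blocked C p

/-- `S ⊆ {1, …, d}` is invariant if `E` and `Y` are d-separated given `S`. -/
def Invariant (S : Set (Fin d)) : Prop := G.DSep Node.E Node.Y (Node.V '' S)

/-- `S` is minimally invariant if it is invariant and no strict subset of `S`
is invariant. -/
def MinInvariant (S : Set (Fin d)) : Prop :=
  G.Invariant S ∧ ∀ S', S' ⊂ S → ¬ G.Invariant S'

/-- `S_AS`: the union of all minimally invariant sets. -/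
def SAS : Set (Fin d) := ⋃₀ {S | G.MinInvariant S}

/-- `S_ICP`: the intersection of all invariant sets (`∅` if there are none). -/
def SICP : Set (Fin d) :=
  {j | (∃ S, G.Invariant S) ∧ ∀ S, G.Invariant S → j ∈ S}

/-- `S_AS^m`: the union of all minimally invariant sets of cardinality `≤ m`. -/
def SASm (m : ℕ) : Set (Fin d) := ⋃₀ {S | G.MinInvariant S ∧ S.ncard ≤ m}

/-- The parents of `Y` among `{1, …, d}`. -/
def paY : Set (Fin d) := {j | G.adj (Node.V j) Node.Y}

/-- The children of `E` among `{1, …, d}`. -/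
def chE : Set (Fin d) := {j | G.adj Node.E (Node.V j)}

/-- The ancestors of `Y` among `{1, …, d}`. -/
def anY : Set (Fin d) := {j | Relation.TransGen G.adj (Node.V j) Node.Y}

/-- `PA(A)`: the union of the parent sets of the elements of `A ⊆ {1, …, d}`. -/
def paOf (A : Set (Fin d)) : Set (Fin d) := {j | ∃ i ∈ A, G.adj (Node.V j) (Node.V i)}

end CGraph

namespace CGraph

variable {d : ℕ} (G : CGraph d)

lemma adj_irrefl (v : Node d) : ¬ G.adj v v := fun h => G.acyclic v (Relation.TransGen.single h)

lemma adj_asymm {u v : Node d} (h : G.adj u v) : ¬ G.adj v u :=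
  fun h' => G.acyclic u ((Relation.TransGen.single h).tail h')

lemma desc_irrefl (v : Node d) : ¬ G.Desc v v := G.acyclic v

lemma not_desc_E (v : Node d) : ¬ G.Desc v Node.E := by
  intro h
  obtain ⟨b, -, hb⟩ := Relation.TransGen.tail'_iff.1 h
  exact G.exogenous b hb

lemma edge_symm {u v : Node d} (h : G.Edge u v) : G.Edge v u := h.symm

/-- ancestors-or-self of a set. -/
def anc (X : Set (Node d)) : Set (Node d) := {v | ∃ x ∈ X, v = x ∨ G.Desc v x}

/-- ancestors-or-self of `Y`. -/
def ancY : Set (Node d) := {v | v = Node.Y ∨ G.Desc v Node.Y}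

lemma anc_ancY {C : Set (Node d)} (hC : C ⊆ G.ancY) {v : Node d} (h : v ∈ G.anc C) :
    v ∈ G.ancY := by
  obtain ⟨x, hx, h⟩ := h
  rcases h with rfl | h
  · exact hC hx
  · rcases hC hx with rfl | hx'
    · exact Or.inr h
    · exact Or.inr (h.trans hx')

/-- activity of a list (no triple blocks it) -/
def act (C : Set (Node d)) (p : List (Node d)) : Prop :=
  ∀ u m w, [u, m, w] <:+: p → ¬ G.BlockedAt C u m w

lemma blocked_iff {C : Set (Node d)} {p : List (Node d)} :
    G.Blocked C p ↔ ∃ u m w, [u, m, w] <:+: p ∧ G.BlockedAt C u m w := by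
  constructor
  · rintro ⟨q, u, m, w, r, rfl, hb⟩
    exact ⟨u, m, w, ⟨q, r, by simp⟩, hb⟩
  · rintro ⟨u, m, w, ⟨s, t, rfl⟩, hb⟩
    exact ⟨s, u, m, w, t, by simp, hb⟩

lemma not_blocked_iff_act {C : Set (Node d)} {p : List (Node d)} :
    ¬ G.Blocked C p ↔ G.act C p := by
  rw [blocked_iff]
  push_neg
  rfl

lemma act_infix {C : Set (Node d)} {p l : List (Node d)} (h : G.act C p) (hl : l <:+: p) :
    G.act C l := fun u m w hi => h u m w (hi.trans hl)

lemma blockedAt_symm {C : Set (Node d)} {u m w : Node d} (h : G.BlockedAt C u m w) :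
    G.BlockedAt C w m u := by
  unfold BlockedAt at *
  tauto

lemma act_reverse {C : Set (Node d)} {p : List (Node d)} (h : G.act C p) :
    G.act C p.reverse := by
  intro u m w hi
  have h2 : [w, m, u] <:+: p := by
    have := List.reverse_infix.2 hi
    simpa using this
  exact fun hb => h w m u h2 (G.blockedAt_symm hb)

lemma chain'_infix {R : Node d → Node d → Prop} {p l : List (Node d)}
    (h : List.Chain' R p) (hl : l <:+: p) : List.Chain' R l := by
  obtain ⟨s, t, rfl⟩ := hl
  exact ((List.isChain_append.1 ((List.isChain_append.1 h).1)).2).1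

lemma infix3_split {α : Type*} {u m w : α} {A B : List α} (h : [u, m, w] <:+: A ++ B) :
    [u, m, w] <:+: A ∨ [u, m, w] <:+: B ∨
      (∃ A' B', A = A' ++ [u] ∧ B = m :: w :: B') ∨
      (∃ A' B', A = A' ++ [u, m] ∧ B = w :: B') := by
  induction A with
  | nil => exact Or.inr (Or.inl (by simpa using h))
  | cons a A ih =>
    obtain ⟨s, t, hst⟩ := h
    cases s with
    | nil =>
      simp only [List.nil_append, List.cons_append, List.cons.injEq] at hst
      obtain ⟨rfl, h2⟩ := hst
      cases A with
      | nil =>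
        exact Or.inr (Or.inr (Or.inl ⟨[], t, by simp, by simpa using h2.symm⟩))
      | cons m' A' =>
        simp only [List.cons_append, List.cons.injEq] at h2
        obtain ⟨rfl, h3⟩ := h2
        cases A' with
        | nil =>
          exact Or.inr (Or.inr (Or.inr ⟨[], t, by simp, by simpa using h3.symm⟩))
        | cons w' A'' =>
          simp only [List.cons_append, List.cons.injEq] at h3
          obtain ⟨rfl, -⟩ := h3
          exact Or.inl ⟨[], A'', by simp⟩
    | cons a' s' =>
      simp only [List.cons_append, List.cons.injEq] at hst
      obtain ⟨rfl, h2⟩ := hst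
      rcases ih ⟨s', t, by simpa using h2⟩ with h | h | ⟨A', B', rfl, hB⟩ | ⟨A', B', rfl, hB⟩
      · exact Or.inl (h.trans ⟨[a'], [], by simp⟩)
      · exact Or.inr (Or.inl h)
      · exact Or.inr (Or.inr (Or.inl ⟨a' :: A', B', by simp, hB⟩))
      · exact Or.inr (Or.inr (Or.inr ⟨a' :: A', B', by simp, hB⟩))

variable {G}

/-- If an active list starts with a forward edge `u → m`, then `u` is an
ancestor(-or-self) of `C` or a strict ancestor of the last node. -/
lemma forward_reach {C : Set (Node d)} :
    ∀ (rest : List (Node d)) (u m : Node d), List.Chain' G.Edge (u :: m :: rest) →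
      G.act C (u :: m :: rest) → G.adj u m →
      ∀ y, (u :: m :: rest).getLast? = some y → (u ∈ G.anc C ∨ G.Desc u y)
  | [], u, m, _, _, hum, y, hy => by
    simp at hy
    exact Or.inr (hy ▸ Relation.TransGen.single hum)
  | w :: r, u, m, hch, hact, hum, y, hy => by
    have hmw : G.Edge m w := (List.isChain_cons_cons.1 (List.isChain_cons_cons.1 hch).2).1
    rcases hmw with hmw | hwm
    · have hrec := forward_reach r m w (List.isChain_cons_cons.1 hch).2
        (G.act_infix hact ⟨[u], [], by simp⟩) hmw y (by simpa using hy)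
      rcases hrec with h | h
      · obtain ⟨x, hx, h⟩ := h
        rcases h with h | h
        · exact Or.inl ⟨x, hx, Or.inr (h ▸ Relation.TransGen.single hum)⟩
        · exact Or.inl ⟨x, hx, Or.inr (Relation.TransGen.head hum h)⟩
      · exact Or.inr (Relation.TransGen.head hum h)
    · have hb := hact u m w ⟨[], r, by simp⟩
      unfold BlockedAt at hb
      push_neg at hb
      obtain ⟨-, h2⟩ := hb
      rcases Classical.em (m ∈ C) with hm | hm
      · exact Or.inl ⟨m, hm, Or.inr (Relation.TransGen.single hum)⟩
      · obtain ⟨x, hx, hxC⟩ := h2 ⟨hum, hwm⟩ hm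
        exact Or.inl ⟨x, hxC, Or.inr (Relation.TransGen.head hum hx)⟩

lemma not_blockedAt_of_noncol {C : Set (Node d)} {u m w : Node d}
    (hnc : ¬ (G.adj u m ∧ G.adj w m)) (hm : m ∉ C) : ¬ G.BlockedAt C u m w := by
  rintro (⟨-, h⟩ | ⟨h, -⟩)
  · exact hm h
  · exact hnc h

lemma not_blockedAt_of_col {C : Set (Node d)} {u m w : Node d}
    (hcol : G.adj u m ∧ G.adj w m) (h : ∃ x ∈ C, m = x ∨ G.Desc m x) :
    ¬ G.BlockedAt C u m w := by
  rintro (⟨hnc, -⟩ | ⟨-, hmC, hd⟩)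
  · exact hnc hcol
  · obtain ⟨x, hx, h⟩ := h
    rcases h with rfl | h
    · exact hmC hx
    · exact hd x h hx

lemma notin_of_not_blockedAt {C : Set (Node d)} {u m w : Node d}
    (h : ¬ G.BlockedAt C u m w) (hnc : ¬ (G.adj u m ∧ G.adj w m)) : m ∉ C :=
  fun hm => h (Or.inl ⟨hnc, hm⟩)

lemma selfdesc_of_not_blockedAt {C : Set (Node d)} {u m w : Node d}
    (h : ¬ G.BlockedAt C u m w) (hcol : G.adj u m ∧ G.adj w m) :
    ∃ x ∈ C, m = x ∨ G.Desc m x := by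
  by_cases hm : m ∈ C
  · exact ⟨m, hm, Or.inl rfl⟩
  · by_contra hno
    push_neg at hno
    refine h (Or.inr ⟨hcol, hm, fun x hd hxC => ?_⟩)
    exact (hno x hxC).2 hd

lemma edges_of_infix {p : List (Node d)} {u m w : Node d}
    (hch : List.Chain' G.Edge p) (h : [u, m, w] <:+: p) : G.Edge u m ∧ G.Edge m w := by
  have h3 : List.Chain' G.Edge [u, m, w] := chain'_infix hch h
  exact ⟨(List.isChain_cons_cons.1 h3).1, (List.isChain_cons_cons.1 (List.isChain_cons_cons.1 h3).2).1⟩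

/-- `p` is a walk (not necessarily duplicate-free). -/
def IsWalk (p : List (Node d)) (a b : Node d) : Prop :=
  p.head? = some a ∧ p.getLast? = some b ∧ p.Chain' G.Edge

lemma sub2_split {α : Type*} {x : α} :
    ∀ {l : List α}, List.Sublist [x, x] l → ∃ s t u, l = s ++ x :: t ++ x :: u := by
  intro l h
  induction l with
  | nil => simp at h
  | cons a l ih =>
    rcases List.sublist_cons_iff.1 h with h' | ⟨r, hr, hr'⟩
    · obtain ⟨s, t, u, rfl⟩ := ih h'
      exact ⟨a :: s, t, u, by simp⟩
    · injection hr with h1 h2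
      subst h1
      subst h2
      have hx : x ∈ l := List.singleton_sublist.1 hr'
      obtain ⟨s, t, rfl⟩ := List.append_of_mem hx
      exact ⟨[], s, t, by simp⟩

lemma exists_dup_split {p : List (Node d)} (h : ¬ p.Nodup) :
    ∃ (v : Node d) (q1 q2 q3 : List (Node d)), p = q1 ++ v :: q2 ++ v :: q3 := by
  rw [List.nodup_iff_sublist] at h
  push_neg at h
  obtain ⟨v, hv⟩ := h
  obtain ⟨s, t, u, rfl⟩ := sub2_split hv
  exact ⟨v, s, t, u, rfl⟩

lemma splice {C : Set (Node d)} {q1 q2 q3 : List (Node d)} {v a b : Node d}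
    (hw : G.IsWalk (q1 ++ v :: q2 ++ v :: q3) a b)
    (ha : G.act C (q1 ++ v :: q2 ++ v :: q3)) :
    G.IsWalk (q1 ++ v :: q3) a b ∧ G.act C (q1 ++ v :: q3) := by
  obtain ⟨hhd, hlast, hch⟩ := hw
  have hp : q1 ++ v :: q2 ++ v :: q3 = (q1 ++ (v :: q2)) ++ (v :: q3) := by simp
  have hchA := List.isChain_append.1 (hp ▸ hch)
  have hch1 := List.isChain_append.1 hchA.1
  -- junction at second occurrence
  have hg : ∃ g, (v :: q2).getLast? = some g ∧ G.Edge g v := by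
    refine ⟨(v :: q2).getLast (by simp), List.getLast?_eq_getLast _, ?_⟩
    refine hchA.2.2 _ ?_ v (by simp)
    rw [List.getLast?_append]
    simp [List.getLast?_eq_getLast (l := v :: q2) (by simp)]
  obtain ⟨g, hgl, hgv⟩ := hg
  -- q2 is nonempty
  have hq2 : q2 ≠ [] := by
    rintro rfl
    simp at hgl
    subst hgl
    rcases hgv with h | h <;> exact G.adj_irrefl v h
  obtain ⟨c2, q2', rfl⟩ := List.exists_cons_of_ne_nil hq2
  -- edges
  have hxe : ∀ x ∈ q1.getLast?, G.Edge x v := by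
    intro x hx
    exact hch1.2.2 x hx v (by simp)
  have hvc2 : G.Edge v c2 := (List.isChain_cons_cons.1 hch1.2.1).1
  -- components of the walk predicate
  have hhd' : (q1 ++ v :: q3).head? = some a := by
    rw [List.head?_append] at hhd ⊢
    simpa using hhd
  have hlast' : (q1 ++ v :: q3).getLast? = some b := by
    rw [hp] at hlast
    rw [List.getLast?_append] at hlast
    have hs : (v :: q3).getLast? = some ((v :: q3).getLast (by simp)) :=
      List.getLast?_eq_getLast _
    rw [show q1 ++ v :: q3 = q1 ++ (v :: q3) by simp, List.getLast?_append]
    rw [hs] at hlast ⊢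
    simpa using hlast
  have hch' : (q1 ++ v :: q3).Chain' G.Edge := by
    rw [show q1 ++ v :: q3 = q1 ++ (v :: q3) by simp]
    show List.IsChain _ _
    rw [List.isChain_append]
    exact ⟨hch1.1, hchA.2.1, fun x hx y hy => by simp at hy; subst hy; exact hxe x hx⟩
  refine ⟨⟨hhd', hlast', hch'⟩, ?_⟩
  -- activity
  intro x y z hinf
  rw [show q1 ++ v :: q3 = q1 ++ (v :: q3) by simp] at hinf
  rcases infix3_split hinf with h | h | ⟨A', B', hA, hB⟩ | ⟨A', B', hA, hB⟩
  · exact ha x y z (h.trans ⟨[], v :: (c2 :: q2') ++ v :: q3, by simp⟩)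
  · exact ha x y z (h.trans ⟨q1 ++ (v :: c2 :: q2'), [], by simp⟩)
  · -- the junction triple
    obtain ⟨rfl, rfl⟩ : v = y ∧ q3 = z :: B' := by
      simpa [List.cons.injEq] using hB
    have hxl : q1.getLast? = some x := by rw [hA]; simp
    have hEx : G.Edge x v := hxe x hxl
    have hEz : G.Edge v z := (List.isChain_cons_cons.1 hchA.2.1).1
    -- first-occurrence triple [x, v, c2]
    have hinf1 : [x, v, c2] <:+: q1 ++ v :: (c2 :: q2') ++ v :: (z :: B') :=
      ⟨A', q2' ++ v :: z :: B', by simp [hA]⟩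
    have hb1 := ha x v c2 hinf1
    -- second-occurrence triple [g, v, z]
    have hinf2 : [g, v, z] <:+: q1 ++ v :: (c2 :: q2') ++ v :: (z :: B') := by
      refine ⟨q1 ++ (v :: c2 :: q2').dropLast, B', ?_⟩
      have hdl : (v :: c2 :: q2').dropLast ++ [g] = v :: c2 :: q2' := by
        have := List.dropLast_append_getLast (l := v :: c2 :: q2') (by simp)
        rw [List.getLast?_eq_getLast (l := v :: c2 :: q2') (by simp)] at hgl
        injection hgl with hgl'
        rw [hgl'] at this
        exact this
      calc q1 ++ (v :: c2 :: q2').dropLast ++ [g, v, z] ++ B'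
          = q1 ++ ((v :: c2 :: q2').dropLast ++ [g]) ++ (v :: z :: B') := by simp
        _ = _ := by rw [hdl]
    have hb2 := ha g v z hinf2
    rcases hEx with hxv | hvx
    · rcases hEz with hvz | hzv
      · -- v has out-edge towards z: v not in C by second triple
        have hvC : v ∉ C :=
          G.notin_of_not_blockedAt hb2 (fun hc => G.adj_asymm hvz hc.2)
        exact G.not_blockedAt_of_noncol (fun hc => G.adj_asymm hvz hc.2) hvC
      · -- collider at junction
        rcases hvc2 with hvc | hcv
        · -- follow arrows from v through the segment to v: impossible or anc C
          have hseg : (v :: c2 :: q2') ++ [v] <:+: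
              q1 ++ v :: (c2 :: q2') ++ v :: (z :: B') := ⟨q1, z :: B', by simp⟩
          have hsch : List.Chain' G.Edge (v :: c2 :: (q2' ++ [v])) := by
            have := chain'_infix hch hseg
            simpa using this
          have hsact : G.act C (v :: c2 :: (q2' ++ [v])) := by
            have := G.act_infix ha hseg
            simpa using this
          have := forward_reach (q2' ++ [v]) v c2 hsch hsact hvc v
            (by rw [show v :: c2 :: (q2' ++ [v]) = (v :: c2 :: q2') ++ [v] by simp,
                  List.getLast?_concat])
          rcases this with h | h
          · obtain ⟨xx, hxx, hh⟩ := h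
            exact G.not_blockedAt_of_col ⟨hxv, hzv⟩ ⟨xx, hxx, hh⟩
          · exact absurd h (G.desc_irrefl v)
        · -- first triple is a collider in p
          have := G.selfdesc_of_not_blockedAt hb1 ⟨hxv, hcv⟩
          exact G.not_blockedAt_of_col ⟨hxv, hzv⟩ this
    · -- v has out-edge towards x: v not in C by first triple
      have hvC : v ∉ C :=
        G.notin_of_not_blockedAt hb1 (fun hc => G.adj_asymm hvx hc.1)
      exact G.not_blockedAt_of_noncol (fun hc => G.adj_asymm hvx hc.1) hvC
  · -- triple entirely inside q1 ++ [v]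
    obtain ⟨rfl, rfl⟩ : v = z ∧ q3 = B' := by
      simpa [List.cons.injEq] using hB
    refine ha x y v ⟨A', (c2 :: q2') ++ v :: q3, ?_⟩
    simp [hA]

lemma walk_to_path {C : Set (Node d)} :
    ∀ (n : ℕ) (p : List (Node d)) {a b : Node d}, p.length ≤ n → G.IsWalk p a b →
      G.act C p → ∃ q, G.IsPath q a b ∧ G.act C q := by
  intro n
  induction n with
  | zero =>
    intro p a b hn hw _
    rcases p with - | ⟨x, p⟩
    · simp [IsWalk] at hw
    · simp at hn
  | succ n ih =>
    intro p a b hn hw hact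
    by_cases hnd : p.Nodup
    · exact ⟨p, ⟨hw.1, hw.2.1, hnd, hw.2.2⟩, hact⟩
    · obtain ⟨v, q1, q2, q3, rfl⟩ := exists_dup_split hnd
      obtain ⟨hw', hact'⟩ := G.splice hw hact
      refine ih (q1 ++ v :: q3) ?_ hw' hact'
      have := hn
      simp only [List.length_append, List.length_cons] at this ⊢
      omega

lemma dsep_iff_walk {C : Set (Node d)} {a b : Node d} :
    G.DSep a b C ↔ ∀ p, G.IsWalk p a b → ¬ G.act C p := by
  constructor
  · intro h p hw hact
    obtain ⟨q, hq, hqa⟩ := G.walk_to_path p.length p le_rfl hw hact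
    exact (G.not_blocked_iff_act.2 hqa) (h q hq)
  · intro h p hp
    by_contra hb
    exact h p ⟨hp.1, hp.2.1, hp.2.2.2⟩ (G.not_blocked_iff_act.1 hb)

lemma head?_of_prefix {α : Type*} {A B : List α} {a : α} (hA : A ≠ [])
    (h : (A ++ B).head? = some a) : A.head? = some a := by
  rcases A with - | ⟨x, A⟩
  · exact absurd rfl hA
  · simpa using h

lemma getLast?_of_suffix {α : Type*} {A B : List α} {b : α} (hB : B ≠ [])
    (h : (A ++ B).getLast? = some b) : B.getLast? = some b := by
  rw [List.getLast?_append, List.getLast?_eq_getLast hB, Option.some_or] at h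
  rw [List.getLast?_eq_getLast hB]
  exact h

/-- A non-collider on an active walk is an ancestor of `C`, of the start, or
of the end. -/
lemma noncol_anc {C : Set (Node d)} {p : List (Node d)} {a b u m w : Node d}
    (hw : G.IsWalk p a b) (hact : G.act C p) (hinf : [u, m, w] <:+: p)
    (hnc : ¬ (G.adj u m ∧ G.adj w m)) :
    m ∈ G.anc C ∨ G.Desc m b ∨ G.Desc m a := by
  obtain ⟨hhd, hlast, hch⟩ := hw
  obtain ⟨he1, he2⟩ := G.edges_of_infix hch hinf
  obtain ⟨s, t, hst⟩ := hinf
  have hout : G.adj m u ∨ G.adj m w := by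
    rcases he1 with h1 | h1
    · rcases he2 with h2 | h2
      · exact Or.inr h2
      · exact absurd ⟨h1, h2⟩ hnc
    · exact Or.inl h1
  rcases hout with hmu | hmw
  · -- follow arrows towards the start: reverse the prefix
    have hpfx : (s ++ [u, m]) <:+: p := ⟨[], w :: t, by simp [← hst]⟩
    have hrev : (s ++ [u, m]).reverse = m :: u :: s.reverse := by simp
    have hchr : List.Chain' G.Edge (m :: u :: s.reverse) := by
      rw [← hrev]
      exact List.isChain_reverse.2 (List.IsChain.imp (fun ⦃_ _⦄ h => h.symm) (chain'_infix hch hpfx))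
    have hactr : G.act C (m :: u :: s.reverse) := by
      rw [← hrev]
      exact G.act_reverse (G.act_infix hact hpfx)
    have hlr : (m :: u :: s.reverse).getLast? = some a := by
      rw [← hrev, List.getLast?_reverse]
      have hhd' : ((s ++ [u, m]) ++ (w :: t)).head? = some a := by
        rw [← hst] at hhd
        simpa using hhd
      exact head?_of_prefix (by simp) hhd'
    rcases forward_reach (s.reverse) m u hchr hactr hmu a hlr with h | h
    · exact Or.inl h
    · exact Or.inr (Or.inr h)
  · -- follow arrows towards the end
    have hsfx : (m :: w :: t) <:+: p := ⟨s ++ [u], [], by simp [← hst]⟩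
    have hchs := chain'_infix hch hsfx
    have hacts := G.act_infix hact hsfx
    have hls : (m :: w :: t).getLast? = some b := by
      have hlast' : ((s ++ [u]) ++ (m :: w :: t)).getLast? = some b := by
        rw [← hst] at hlast
        simpa using hlast
      exact getLast?_of_suffix (by simp) hlast'
    rcases forward_reach t m w hchs hacts hmw b hls with h | h
    · exact Or.inl h
    · exact Or.inr (Or.inl h)

/-- Restriction: a separator can be intersected with the ancestors of `Y`. -/
lemma restrict {C : Set (Node d)} (h : G.DSep Node.E Node.Y C) :
    G.DSep Node.E Node.Y (C ∩ G.ancY) := by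
  rw [dsep_iff_walk] at h ⊢
  intro p hw hact'
  refine h p hw ?_
  intro u m w hinf
  rintro (⟨hnc, hmC⟩ | ⟨hcol, hmC, hd⟩)
  · have hm : m ∈ G.ancY := by
      rcases G.noncol_anc hw hact' hinf hnc with h1 | h2 | h3
      · exact G.anc_ancY Set.inter_subset_right h1
      · exact Or.inr h2
      · exact absurd h3 (G.not_desc_E m)
    exact hact' u m w hinf (Or.inl ⟨hnc, hmC, hm⟩)
  · exact hact' u m w hinf
      (Or.inr ⟨hcol, fun hm => hmC hm.1, fun x hx hxC => hd x hx hxC.1⟩)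

lemma chain_desc {c : Node d} {l : List (Node d)} (h : List.Chain G.adj c l) :
    ∀ y ∈ l, G.Desc c y := by
  induction l generalizing c with
  | nil => simp
  | cons b l ih =>
    replace h : List.IsChain G.adj (c :: b :: l) := h
    rw [List.isChain_cons_cons] at h
    intro y hy
    rcases List.mem_cons.1 hy with rfl | hy
    · exact Relation.TransGen.single h.1
    · exact Relation.TransGen.head h.1 (ih h.2 y hy)

/-- Enlarging a separator within the ancestors of `Y` preserves separation. -/
lemma mono {C W : Set (Node d)} (h : G.DSep Node.E Node.Y C) (hCW : C ⊆ W)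
    (hWY : ∀ x ∈ W, x ∉ C → x ∈ G.ancY) : G.DSep Node.E Node.Y W := by
  classical
  rw [dsep_iff_walk] at h ⊢
  intro p hw hact
  set P : ℕ → Prop := fun n => ∃ q u m w r, p = q ++ u :: m :: w :: r ∧ q.length = n ∧
      G.adj u m ∧ G.adj w m ∧ m ∉ C ∧ ∀ x, G.Desc m x → x ∉ C with hPdef
  by_cases hP : ∃ n, P n
  · -- surgery at the first bad collider
    obtain ⟨q, u, c, w, r, hpq, hqlen, hcu, hcw, hcC, hcd⟩ := Nat.find_spec hP
    have hclaim : ∀ x y z (s t : List (Node d)), p = s ++ [x, y, z] ++ t →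
        s.length < Nat.find hP → ¬ G.BlockedAt C x y z := by
      intro x y z s t hst hlen
      rintro (⟨hnc, hmC⟩ | ⟨hcol, hmC, hd⟩)
      · have : ¬ G.BlockedAt W x y z := hact x y z ⟨s, t, hst.symm⟩
        exact G.notin_of_not_blockedAt this hnc (hCW hmC)
      · exact Nat.find_min hP hlen ⟨s, x, y, z, t, by simpa using hst, rfl, hcol.1,
          hcol.2, hmC, hd⟩
    -- the bad collider is an ancestor of Y
    have hcY : c ∈ G.ancY := by
      have hnb : ¬ G.BlockedAt W u c w := hact u c w ⟨q, r, by rw [hpq]; simp⟩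
      obtain ⟨x, hxW, hx⟩ := G.selfdesc_of_not_blockedAt hnb ⟨hcu, hcw⟩
      rcases hx with rfl | hx
      · exact hWY c hxW hcC
      · rcases hWY x hxW (hcd x hx) with rfl | hxY
        · exact Or.inr hx
        · exact Or.inr (hx.trans hxY)
    -- a directed path from c to Y
    have hdir : ∃ l, List.Chain G.adj c l ∧ (c :: l).getLast (by simp) = Node.Y := by
      rcases hcY with rfl | hcY
      · exact ⟨[], List.Chain.nil, rfl⟩
      · exact List.exists_isChain_cons_of_relationReflTransGen hcY.to_reflTransGen
    obtain ⟨l, hl1, hl2⟩ := hdir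
    have hql : ∃ z0, (q ++ [u]).head? = some z0 ∧ z0 = Node.E := by
      rcases hq : (q ++ [u]).head? with - | z0
      · rw [List.head?_eq_none_iff] at hq
        simp at hq
      · refine ⟨z0, rfl, ?_⟩
        have := hw.1
        rw [hpq, show q ++ u :: c :: w :: r = (q ++ [u]) ++ (c :: w :: r) by simp,
          List.head?_append, hq] at this
        simpa using this
    obtain ⟨z0, hz0, rfl⟩ := hql
    have hchp : List.IsChain G.Edge p := hw.2.2
    rw [hpq, show q ++ u :: c :: w :: r = (q ++ [u]) ++ (c :: w :: r) by simp,
      List.isChain_append] at hchp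
    have huc : G.Edge u c := by
      refine hchp.2.2 u ?_ c (by simp)
      simp
    -- the new walk
    refine h ((q ++ [u]) ++ (c :: l)) ⟨?_, ?_, ?_⟩ ?_
    · rw [List.head?_append, hz0]
      rfl
    · rw [List.getLast?_append, List.getLast?_eq_getLast (l := c :: l) (by simp), hl2,
        Option.some_or]
    · show List.IsChain _ _
      rw [List.isChain_append]
      refine ⟨hchp.1, ?_, ?_⟩
      · show List.Chain' G.Edge (c :: l)
        have : List.Chain G.Edge c l := List.Chain.imp (fun a b hab => Or.inl hab) hl1
        exact this
      · intro x hx y hy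
        simp only [List.head?_cons, Option.mem_def, Option.some.injEq] at hy
        subst hy
        rw [List.getLast?_concat] at hx
        simp only [Option.mem_def, Option.some.injEq] at hx
        subst hx
        exact huc
    · -- activity of the new walk
      intro x y z hinf
      rcases infix3_split hinf with hin | hin | ⟨A', B', hA, hB⟩ | ⟨A', B', hA, hB⟩
      · obtain ⟨s, t, hst⟩ := hin
        have hps : p = s ++ [x, y, z] ++ (t ++ (c :: w :: r)) := by
          rw [hpq, show q ++ u :: c :: w :: r = (q ++ [u]) ++ (c :: w :: r) by simp,
            ← hst]
          simp
        have hlen : s.length < Nat.find hP := by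
          have h1 := congrArg List.length hst
          simp at h1
          omega
        exact hclaim x y z s _ hps hlen
      · obtain ⟨s, t, hst⟩ := hin
        have hyl : y ∈ l := by
          rcases s with - | ⟨s0, s'⟩
          · obtain ⟨rfl, hl⟩ : x = c ∧ y :: z :: t = l := by simpa using hst
            rw [← hl]
            simp
          · have h2 : s0 = c ∧ s' ++ x :: y :: z :: t = l := by simpa using hst
            rw [← h2.2]
            simp
        have hyC : y ∉ C := hcd y (G.chain_desc hl1 y hyl)
        have hadj : G.adj y z := by
          have hch2 : List.Chain' G.adj (c :: l) := by
            have : List.Chain G.adj c l := hl1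
            exact this
          have := chain'_infix hch2 ⟨s, t, hst⟩
          exact (List.isChain_cons_cons.1 (List.isChain_cons_cons.1 this).2).1
        exact G.not_blockedAt_of_noncol (fun hc => G.adj_asymm hadj hc.2) hyC
      · -- junction triple (u, c, z1)
        obtain ⟨rfl, rfl⟩ : c = y ∧ l = z :: B' := by simpa [List.cons.injEq] using hB
        obtain rfl : u = x := by
          have h1 : (A' ++ [x]).getLast? = some x := by simp
          rw [← hA, List.getLast?_concat] at h1
          simpa using h1
        have hadj : G.adj c z := (List.chain_cons.1 hl1).1
        exact G.not_blockedAt_of_noncol (fun hc => G.adj_asymm hadj hc.2) hcC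
      · obtain ⟨rfl, rfl⟩ : c = z ∧ l = B' := by simpa using hB
        have hps : p = A' ++ [x, y, c] ++ (w :: r) := by
          rw [hpq, show q ++ u :: c :: w :: r = (q ++ [u]) ++ (c :: w :: r) by simp, hA]
          simp
        have hlen : A'.length < Nat.find hP := by
          have h1 := congrArg List.length hA
          simp at h1
          omega
        exact hclaim x y c A' _ hps hlen
  · -- no bad collider: the walk is active given C
    push_neg at hP
    refine h p hw ?_
    intro u m w hinf
    obtain ⟨s, t, hst⟩ := hinf
    rintro (⟨hnc, hmC⟩ | ⟨hcol, hmC, hd⟩)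
    · exact G.notin_of_not_blockedAt (hact u m w ⟨s, t, hst⟩) hnc (hCW hmC)
    · exact hP s.length ⟨s, u, m, w, t, by simp [← hst], rfl, hcol.1, hcol.2, hmC, hd⟩

lemma remove_anc {S : Set (Fin d)} {j : Fin d} (hj : j ∈ S) (hS : G.Invariant S)
    (hrem : ¬ G.Invariant (S \ {j})) :
    j ∈ G.anY ∨ ∃ k ∈ S, k ≠ j ∧ G.Desc (Node.V j) (Node.V k) := by
  unfold Invariant DSep at hrem
  push_neg at hrem
  obtain ⟨p, hp, hnb⟩ := hrem
  have hact' : G.act (Node.V '' (S \ {j})) p := G.not_blocked_iff_act.1 hnb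
  have hBl := G.blocked_iff.1 (hS p hp)
  obtain ⟨u, m, w, hinf, hb⟩ := hBl
  have hw : G.IsWalk p Node.E Node.Y := ⟨hp.1, hp.2.1, hp.2.2.2⟩
  have hnb' := hact' u m w hinf
  have hsub : Node.V '' (S \ {j}) ⊆ Node.V '' S :=
    Set.image_mono Set.diff_subset
  rcases hb with ⟨hnc, hmC⟩ | ⟨hcol, hmC, hd⟩
  · have hmC' : m ∉ Node.V '' (S \ {j}) := G.notin_of_not_blockedAt hnb' hnc
    obtain ⟨k, hk, rfl⟩ := hmC
    obtain rfl : k = j := by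
      by_contra hkj
      exact hmC' ⟨k, ⟨hk, hkj⟩, rfl⟩
    rcases G.noncol_anc hw hact' hinf hnc with hanc | hY | hE
    · obtain ⟨x, hx, hh⟩ := hanc
      obtain ⟨k', hk', rfl⟩ := hx
      rcases hh with heq | hdesc
      · exact absurd (by simpa using heq.symm) hk'.2
      · exact Or.inr ⟨k', hk'.1, hk'.2, hdesc⟩
    · exact Or.inl hY
    · exact absurd hE (G.not_desc_E _)
  · exact absurd (Or.inr ⟨hcol, fun hm => hmC (hsub hm),
      fun x hx hxC => hd x hx (hsub hxC)⟩) hnb'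

lemma subset_anY {S : Set (Fin d)} (hS : G.Invariant S)
    (hrem : ∀ j ∈ S, ¬ G.Invariant (S \ {j})) : S ⊆ G.anY := by
  by_contra hc
  rw [Set.not_subset] at hc
  obtain ⟨j0, hj0S, hj0⟩ := hc
  set T : Set (Fin d) := {j | j ∈ S ∧ j ∉ G.anY} with hT
  have hstep : ∀ j ∈ T, ∃ k ∈ T, G.Desc (Node.V j) (Node.V k) := by
    rintro j ⟨hjS, hjA⟩
    rcases G.remove_anc hjS hS (hrem j hjS) with h | ⟨k, hkS, hkj, hdesc⟩
    · exact absurd h hjA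
    · exact ⟨k, ⟨hkS, fun hkY => hjA (hdesc.trans hkY)⟩, hdesc⟩
  let r : {j // j ∈ T} → {j // j ∈ T} → Prop :=
    fun a b => G.Desc (Node.V b.1) (Node.V a.1)
  haveI : IsTrans {j // j ∈ T} r := ⟨fun _ _ _ hab hbc => hbc.trans hab⟩
  haveI : IsIrrefl {j // j ∈ T} r := ⟨fun a h => G.desc_irrefl _ h⟩
  have hwf := Finite.wellFounded_of_trans_of_irrefl r
  obtain ⟨mm, -, hmin⟩ := hwf.has_min Set.univ ⟨⟨j0, hj0S, hj0⟩, trivial⟩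
  obtain ⟨k, hkT, hdesc⟩ := hstep mm.1 mm.2
  exact hmin ⟨k, hkT⟩ trivial hdesc

end CGraph

/-- `S` is minimally invariant if and only if `S` is invariant
and, for every `j ∈ S`, the set `S \ {j}` is not invariant. -/
theorem minInvariant_iff_invariant_and_remove_one {d : ℕ} (G : CGraph d)
    (S : Set (Fin d)) :
    G.MinInvariant S ↔ G.Invariant S ∧ ∀ j ∈ S, ¬ G.Invariant (S \ {j}) := by
  constructor
  · rintro ⟨hinv, hmin⟩
    exact ⟨hinv, fun j hj => hmin _ (Set.sdiff_singleton_ssubset.2 hj)⟩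
  · rintro ⟨hinv, hrem⟩
    refine ⟨hinv, fun S' hlt hS' => ?_⟩
    have hsub := G.subset_anY hinv hrem
    have hres := G.restrict (C := Node.V '' S') hS'
    obtain ⟨j, hjS, hjS'⟩ := Set.exists_of_ssubset hlt
    refine hrem j hjS ?_
    refine G.mono hres ?_ ?_
    · rintro x ⟨⟨k, hk, rfl⟩, -⟩
      exact ⟨k, ⟨hlt.1 hk, fun he => hjS' (by rwa [show k = j from he] at hk)⟩, rfl⟩
    · rintro x ⟨k, hk, rfl⟩ -
      exact Or.inr (hsub hk.1)
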